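/- Let G be a group, let a_1, ..., a_{m+1} be pairwise commuting elements of G (i.e., the subgroup they generate is abelian on these generators: a_i a_j = a_j a_i for all i, j), and let f ∈ G satisfy f a_i f^{-1} = a_{i+1} for i = 1, ..., m. Then for any integers k_1, ..., k_{m+1}, setting K_i = k_1 + ... + k_i, one has a_1^{k_1} a_2^{k_2} ··· a_{m+1}^{k_{m+1}} = [a_1^{K_1} a_2^{K_2} ··· a_m^{K_m}, f] · a_{m+1}^{K_{m+1}}. -/

import Mathlib

open scoped commutatorElement

theorem prod_powers_eq_commutator_mul {G : Type*} [Group G] (m : ℕ) (a : ℕ → G) (f : G)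
    (hcomm : ∀ i j, i ≤ m → j ≤ m → a i * a j = a j * a i)
    (hconj : ∀ i, i < m → f * a i * f⁻¹ = a (i + 1))
    (k : ℕ → ℤ) :
    ((List.range (m + 1)).map (fun i => a i ^ k i)).prod =
      ⁅((List.range m).map (fun i => a i ^ (∑ j ∈ Finset.range (i + 1), k j))).prod, f⁆ *
        a m ^ (∑ j ∈ Finset.range (m + 1), k j) := by
  induction m with
  | zero => simp [List.range_succ, commutatorElement_def]
  | succ n ih =>
    have hcomm' : ∀ i j, i ≤ n → j ≤ n → a i * a j = a j * a i :=
      fun i j hi hj => hcomm i j (hi.trans n.le_succ) (hj.trans n.le_succ)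
    have hconj' : ∀ i, i < n → f * a i * f⁻¹ = a (i + 1) :=
      fun i hi => hconj i (hi.trans n.lt_succ_self)
    have IH := ih hcomm' hconj'
    set K : ℕ → ℤ := fun i => ∑ j ∈ Finset.range (i + 1), k j with hK
    set P : G := ((List.range n).map (fun i => a i ^ K i)).prod with hP
    rw [List.range_succ, List.map_append, List.prod_append, IH,
      List.range_succ, List.map_append, List.prod_append]
    simp only [List.map_cons, List.map_nil, List.prod_cons, List.prod_nil, mul_one]
    -- key conjugation fact
    have hQ : f * P * f⁻¹ = ((List.range n).map (fun i => a (i + 1) ^ K i)).prod := by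
      have := map_list_prod (MulAut.conj f).toMonoidHom ((List.range n).map (fun i => a i ^ K i))
      simp only [MulAut.conj_apply, MulEquiv.coe_toMonoidHom, List.map_map] at this ⊢
      rw [this]
      congr 1
      apply List.map_congr_left
      intro i hi
      simp only [Function.comp, map_zpow, MulAut.conj_apply]
      rw [hconj i ((List.mem_range.mp hi).trans n.lt_succ_self)]
    set Q : G := ((List.range n).map (fun i => a (i + 1) ^ K i)).prod with hQdef
    have hcommQ : ∀ j, j ≤ n + 1 → Commute (a j) Q := by
      intro j hj
      apply Commute.list_prod_right
      intro x hx
      simp only [List.mem_map, List.mem_range] at hx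
      obtain ⟨i, hi, rfl⟩ := hx
      exact Commute.zpow_right (hcomm j (i + 1) hj (by omega)) _
    have hcn : Commute Q⁻¹ (a n ^ K n) :=
      (((hcommQ n (by omega)).zpow_left _).symm).inv_left
    have hcn1 : ∀ t : ℤ, Commute Q⁻¹ (a (n + 1) ^ t) :=
      fun t => (((hcommQ (n + 1) le_rfl).zpow_left _).symm).inv_left
    have hconjn : f * a n ^ K n * f⁻¹ = a (n + 1) ^ K n := by
      rw [← conj_zpow, hconj n n.lt_succ_self]
    have hKsucc : K (n + 1) = K n + k (n + 1) := Finset.sum_range_succ k (n + 1)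
    have hPinv : f * P⁻¹ * f⁻¹ = Q⁻¹ := by
      rw [← hQ]; group
    calc ⁅P, f⁆ * a n ^ K n * a (n + 1) ^ k (n + 1)
        = P * Q⁻¹ * (a n ^ K n * a (n + 1) ^ k (n + 1)) := by
          rw [commutatorElement_def, ← hPinv]; group
      _ = P * (a n ^ K n * a (n + 1) ^ k (n + 1)) * Q⁻¹ := by
          rw [mul_assoc, (hcn.mul_right (hcn1 _)).eq, ← mul_assoc]
      _ = P * a n ^ K n * (f * (a n ^ K n)⁻¹ * f⁻¹) * (f * P⁻¹ * f⁻¹) *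
            a (n + 1) ^ K (n + 1) := by
          rw [hPinv]
          have h1 : f * (a n ^ K n)⁻¹ * f⁻¹ = (a (n + 1) ^ K n)⁻¹ := by
            rw [← hconjn]; group
          rw [h1, hKsucc, mul_assoc _ Q⁻¹, (hcn1 _).eq, ← mul_assoc]
          rw [zpow_add]; group
      _ = ⁅P * a n ^ K n, f⁆ * a (n + 1) ^ K (n + 1) := by
          rw [commutatorElement_def]; group
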